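/- Let r13, r23, r33, M, Mz, Mx, My be real numbers with r33 ≠ 0, M > 0 and Mz > 0. Define G1(φ, θ) = (r13·cos φ + r23·sin φ·sin θ − r33·sin φ·cos θ)/(r13·sin φ − r23·cos φ·sin θ + r33·cos θ·cos φ), G2(φ, θ) = (r23·cos θ + r33·sin θ)/(r13·sin φ − r23·cos φ·sin θ + r33·cos θ·cos φ), x_zmp(φ, θ) = Mx/M − (Mz/M)·G1(φ, θ) and y_zmp(φ, θ) = My/M − (Mz/M)·G2(φ, θ). Then the partial derivative of x_zmp with respect to the roll angle φ at (0, 0) equals (Mz/M)·(1 + r13²/r33²), which is at least Mz/M > 0, and the partial derivative of y_zmp with respect to the pitch angle θ at (0, 0) equals −(Mz/M)·(1 + r23²/r33²), which is at most −Mz/M < 0. -/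

import Mathlib

/-- Proposition 2 proof (monotonicity bounds, eq. (zmp_mono)): the sensitivity of the
perturbed quasi-static ZMP coordinates to the roll and pitch perturbation angles at
zero perturbation. -/
theorem zmp_mono_bounds
    (r13 r23 r33 M Mz Mx My : ℝ) (hr33 : r33 ≠ 0) (hM : 0 < M) (hMz : 0 < Mz)
    (G1 G2 : ℝ → ℝ → ℝ) (xzmp yzmp : ℝ → ℝ → ℝ)
    (hG1 : ∀ φ θ, G1 φ θ =
      (r13 * Real.cos φ + r23 * Real.sin φ * Real.sin θ - r33 * Real.sin φ * Real.cos θ) /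
      (r13 * Real.sin φ - r23 * Real.cos φ * Real.sin θ + r33 * Real.cos θ * Real.cos φ))
    (hG2 : ∀ φ θ, G2 φ θ =
      (r23 * Real.cos θ + r33 * Real.sin θ) /
      (r13 * Real.sin φ - r23 * Real.cos φ * Real.sin θ + r33 * Real.cos θ * Real.cos φ))
    (hx : ∀ φ θ, xzmp φ θ = Mx / M - (Mz / M) * G1 φ θ)
    (hy : ∀ φ θ, yzmp φ θ = My / M - (Mz / M) * G2 φ θ) :
    (deriv (fun φ => xzmp φ 0) 0 = (Mz / M) * (1 + r13 ^ 2 / r33 ^ 2) ∧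
      Mz / M ≤ deriv (fun φ => xzmp φ 0) 0 ∧ 0 < Mz / M) ∧
    (deriv (fun θ => yzmp 0 θ) 0 = -((Mz / M) * (1 + r23 ^ 2 / r33 ^ 2)) ∧
      deriv (fun θ => yzmp 0 θ) 0 ≤ -(Mz / M) ∧ -(Mz / M) < 0) := by
  have hMzM : 0 < Mz / M := div_pos hMz hM
  have hr33sq : (0:ℝ) < r33 ^ 2 := by positivity
  -- x part
  have hxf : (fun φ => xzmp φ 0) = fun φ => Mx / M -
      (Mz / M) * ((r13 * Real.cos φ - r33 * Real.sin φ) /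
        (r13 * Real.sin φ + r33 * Real.cos φ)) := by
    funext φ; rw [hx, hG1]; simp
  have hN1 : HasDerivAt (fun φ => r13 * Real.cos φ - r33 * Real.sin φ)
      (-(r33 : ℝ)) 0 := by
    have := ((Real.hasDerivAt_cos 0).const_mul r13).sub
      ((Real.hasDerivAt_sin 0).const_mul r33)
    exact this.congr_deriv (by simp)
  have hD1 : HasDerivAt (fun φ => r13 * Real.sin φ + r33 * Real.cos φ)
      (r13 : ℝ) 0 := by
    have := ((Real.hasDerivAt_sin 0).const_mul r13).add
      ((Real.hasDerivAt_cos 0).const_mul r33)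
    exact this.congr_deriv (by simp)
  have hD1ne : r13 * Real.sin 0 + r33 * Real.cos 0 ≠ 0 := by simpa using hr33
  have hq1 := hN1.div hD1 hD1ne
  have hx' : HasDerivAt (fun φ => xzmp φ 0) ((Mz / M) * (1 + r13 ^ 2 / r33 ^ 2)) 0 := by
    rw [hxf]
    have h := (hq1.const_mul (Mz / M)).const_sub (Mx / M)
    refine h.congr_deriv ?_
    simp only [Real.sin_zero, Real.cos_zero, mul_zero, mul_one, zero_add, sub_zero]
    field_simp
    ring
  -- y part
  have hyf : (fun θ => yzmp 0 θ) = fun θ => My / M -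
      (Mz / M) * ((r23 * Real.cos θ + r33 * Real.sin θ) /
        (r33 * Real.cos θ - r23 * Real.sin θ)) := by
    funext θ; rw [hy, hG2]
    simp only [Real.sin_zero, Real.cos_zero, mul_zero, mul_one, one_mul, zero_sub]
    ring_nf
  have hN2 : HasDerivAt (fun θ => r23 * Real.cos θ + r33 * Real.sin θ)
      (r33 : ℝ) 0 := by
    have := ((Real.hasDerivAt_cos 0).const_mul r23).add
      ((Real.hasDerivAt_sin 0).const_mul r33)
    exact this.congr_deriv (by simp)
  have hD2 : HasDerivAt (fun θ => r33 * Real.cos θ - r23 * Real.sin θ)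
      (-(r23 : ℝ)) 0 := by
    have := ((Real.hasDerivAt_cos 0).const_mul r33).sub
      ((Real.hasDerivAt_sin 0).const_mul r23)
    exact this.congr_deriv (by simp)
  have hD2ne : r33 * Real.cos 0 - r23 * Real.sin 0 ≠ 0 := by simpa using hr33
  have hq2 := hN2.div hD2 hD2ne
  have hy' : HasDerivAt (fun θ => yzmp 0 θ) (-((Mz / M) * (1 + r23 ^ 2 / r33 ^ 2))) 0 := by
    rw [hyf]
    have h := (hq2.const_mul (Mz / M)).const_sub (My / M)
    refine h.congr_deriv ?_
    simp only [Real.sin_zero, Real.cos_zero, mul_zero, mul_one, zero_add, sub_zero]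
    rw [show (1:ℝ) + r23 ^ 2 / r33 ^ 2 = (r33 * r33 - (r23 + 0) * -r23) / r33 ^ 2 by
      field_simp; ring]
  refine ⟨⟨hx'.deriv, ?_, hMzM⟩, ⟨hy'.deriv, ?_, by linarith⟩⟩
  · rw [hx'.deriv]
    nlinarith [sq_nonneg r13, div_nonneg (sq_nonneg r13) hr33sq.le]
  · rw [hy'.deriv]
    nlinarith [div_nonneg (sq_nonneg r23) hr33sq.le]
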